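/- If x : ℕ → S is an unpredictable sequence (in the finite-state sense), then the point x is Poisson stable for the shift map φ on F = ℕ → S: x is a limit point of its own forward orbit, i.e., there is a sequence n_k → ∞ with φ^{n_k}(x) → x in the metric δ. -/
import Mathlib


/-- The metric δ(x,y) = Σ_{k=1}^∞ d(x_k,y_k)/2^k on the space F = ℕ → S of
sequences in S (here the k-th coordinate, k = 0,1,2,..., plays the role of
x_{k+1}, so it carries the weight 1/2^{k+1}). -/
noncomputable def seqDist {S : Type*} [MetricSpace S] (x y : ℕ → S) : ℝ :=
  ∑' k : ℕ, dist (x k) (y k) / 2 ^ (k + 1)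

/-- The shift map φ(x)_k = x_{k+1}. -/
def shift {S : Type*} (x : ℕ → S) : ℕ → S := fun k => x (k + 1)

open Filter in
/-- A sequence x : ℕ → S is unpredictable (Definition 2 of the paper): there are
ε₀ > 0 and sequences ζ_n, η_n of positive integers diverging to ∞ such that
x_{i+ζ_n} = x_i on every bounded interval of integers for n large, while
d(x_{ζ_n+η_n}, x_{η_n}) ≥ ε₀ for every n. -/
def Unpredictable {S : Type*} [MetricSpace S] (x : ℕ → S) : Prop :=
  ∃ (ε₀ : ℝ) (ζ η : ℕ → ℕ), 0 < ε₀ ∧ (∀ n, 0 < ζ n) ∧ (∀ n, 0 < η n) ∧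
    Tendsto ζ atTop atTop ∧ Tendsto η atTop atTop ∧
    (∀ N : ℕ, ∀ᶠ n in atTop, ∀ i ≤ N, x (i + ζ n) = x i) ∧
    (∀ n, ε₀ ≤ dist (x (ζ n + η n)) (x (η n)))

lemma shift_iterate_apply {S : Type*} (x : ℕ → S) (n i : ℕ) :
    (shift^[n] x) i = x (i + n) := by
  induction n generalizing x with
  | zero => simp
  | succ n ih =>
    rw [Function.iterate_succ_apply, ih]
    show x (i + n + 1) = x (i + (n + 1))
    rw [Nat.add_assoc]

lemma seqDist_le_of_agree {S : Type*} [MetricSpace S] (y x : ℕ → S) (D : ℝ)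
    (hD : 0 ≤ D) (hb : ∀ i, dist (y i) (x i) ≤ D) (N : ℕ)
    (h : ∀ i ≤ N, y i = x i) : seqDist y x ≤ D / 2 ^ (N + 1) := by
  have hnn : ∀ k : ℕ, 0 ≤ dist (y k) (x k) / 2 ^ (k + 1) := fun k => by positivity
  have hle : ∀ k : ℕ, dist (y k) (x k) / 2 ^ (k + 1) ≤ D / 2 ^ (k + 1) := by
    intro k
    apply div_le_div_of_nonneg_right (hb k)
    positivity
  have hsumD : Summable (fun k : ℕ => D / 2 ^ (k + 1)) := by
    have : Summable (fun k : ℕ => D * (1 / 2 : ℝ) ^ (k + 1)) :=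
      ((summable_geometric_two).mul_left D).comp_injective (add_left_injective 1)
    refine this.congr fun k => ?_
    rw [one_div_pow, mul_one_div]
  have hsum : Summable (fun k : ℕ => dist (y k) (x k) / 2 ^ (k + 1)) :=
    Summable.of_nonneg_of_le hnn hle hsumD
  unfold seqDist
  rw [← Summable.sum_add_tsum_nat_add (N + 1) hsum]
  have hzero : (∑ i ∈ Finset.range (N + 1), dist (y i) (x i) / 2 ^ (i + 1)) = 0 := by
    apply Finset.sum_eq_zero
    intro i hi
    rw [h i (Nat.lt_succ_iff.mp (Finset.mem_range.mp hi))]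
    simp
  rw [hzero, zero_add]
  have hterm : ∀ i : ℕ, dist (y (i + (N + 1))) (x (i + (N + 1))) / 2 ^ (i + (N + 1) + 1)
      ≤ (D / 2 ^ (N + 1)) / 2 / 2 ^ i := by
    intro i
    have : (D / 2 ^ (N + 1)) / 2 / 2 ^ i = D / 2 ^ (i + (N + 1) + 1) := by
      rw [div_div, div_div]
      congr 1
      ring
    rw [this]
    apply div_le_div_of_nonneg_right (hb _)
    positivity
  have hsumtail : Summable (fun i : ℕ =>
      dist (y (i + (N + 1))) (x (i + (N + 1))) / 2 ^ (i + (N + 1) + 1)) :=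
    Summable.of_nonneg_of_le (fun i => by positivity) hterm (summable_geometric_two' _)
  have htail := Summable.tsum_le_tsum hterm hsumtail (summable_geometric_two' _)
  calc _ ≤ ∑' i : ℕ, (D / 2 ^ (N + 1)) / 2 / 2 ^ i := htail
    _ = D / 2 ^ (N + 1) := tsum_geometric_two' _

open Filter in
/-- An unpredictable sequence is Poisson stable for the shift: it is a limit
point of its own forward orbit in the metric δ. -/
theorem unpredictable_poisson_stable {S : Type*} [MetricSpace S] [Fintype S]
    (x : ℕ → S) (hx : Unpredictable x) :
    ∃ nk : ℕ → ℕ, Tendsto nk atTop atTop ∧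
      Tendsto (fun k => seqDist (shift^[nk k] x) x) atTop (nhds 0) := by
  obtain ⟨ε₀, ζ, η, hε₀, hζpos, hηpos, hζtend, hηtend, heq, hsep⟩ := hx
  -- choose indices
  have hsel : ∀ k : ℕ, ∃ n, k ≤ ζ n ∧ ∀ i ≤ k, x (i + ζ n) = x i := fun k =>
    ((hζtend.eventually_ge_atTop k).and (heq k)).exists
  choose m hm1 hm2 using hsel
  refine ⟨fun k => ζ (m k), tendsto_atTop_mono hm1 tendsto_id, ?_⟩
  -- the diameter bound
  set D := Metric.diam (Set.univ : Set S) with hDdef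
  have hDbd : Bornology.IsBounded (Set.univ : Set S) := Set.finite_univ.isBounded
  have hD : 0 ≤ D := Metric.diam_nonneg
  have hdistD : ∀ a b : S, dist a b ≤ D := fun a b =>
    Metric.dist_le_diam_of_mem hDbd (Set.mem_univ a) (Set.mem_univ b)
  apply squeeze_zero (g := fun k => D / 2 ^ (k + 1))
  · intro k
    apply tsum_nonneg
    intro i
    positivity
  · intro k
    apply seqDist_le_of_agree _ _ D hD (fun i => hdistD _ _) k
    intro i hi
    rw [shift_iterate_apply]
    exact hm2 k i hi
  · have : Tendsto (fun k : ℕ => (D / 2) * (1 / 2 : ℝ) ^ k) atTop (nhds 0) := by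
      simpa using (tendsto_pow_atTop_nhds_zero_of_lt_one (by norm_num : (0:ℝ) ≤ 1/2)
        (by norm_num : (1/2 : ℝ) < 1)).const_mul (D / 2)
    refine this.congr fun k => ?_
    rw [one_div_pow, div_mul_eq_mul_div, mul_one_div, div_div, ← pow_succ]
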